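/- For all y, y' ∈ ℝ^d, the supremum S(y, y') = sup over x (with y+x ≠ 0 ≠ y'+x) of ‖x‖·‖(y + x)/‖y + x‖ − (y' + x)/‖y' + x‖‖ is finite, and moreover S(y, y') ≤ C·(‖y‖ + ‖y'‖) where C = sup{ S(z, z') : ‖z‖ + ‖z'‖ = 1 } is finite. -/

import Mathlib

open scoped ENNReal

section Aux

variable {E : Type*} [NormedAddCommGroup E] [NormedSpace ℝ E]

lemma norm_normalize_le (a : E) : ‖‖a‖⁻¹ • a‖ ≤ 1 := by
  rw [norm_smul, norm_inv, norm_norm]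
  rcases eq_or_ne a 0 with h | h
  · simp [h]
  · rw [inv_mul_cancel₀ (norm_ne_zero_iff.2 h)]

lemma normalize_sub_le {a b : E} (ha : a ≠ 0) (hb : b ≠ 0) :
    ‖‖a‖⁻¹ • a - ‖b‖⁻¹ • b‖ ≤ 2 * ‖a - b‖ / ‖a‖ := by
  have hna : (0:ℝ) < ‖a‖ := norm_pos_iff.2 ha
  have hnb : (0:ℝ) < ‖b‖ := norm_pos_iff.2 hb
  have hsplit : ‖a‖⁻¹ • a - ‖b‖⁻¹ • b = ‖a‖⁻¹ • (a - b) + (‖a‖⁻¹ - ‖b‖⁻¹) • b := by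
    module
  rw [hsplit]
  have h1 : ‖‖a‖⁻¹ • (a - b)‖ = ‖a - b‖ / ‖a‖ := by
    rw [norm_smul, norm_inv, norm_norm, div_eq_inv_mul]
  have h2 : ‖(‖a‖⁻¹ - ‖b‖⁻¹) • b‖ ≤ ‖a - b‖ / ‖a‖ := by
    rw [norm_smul, Real.norm_eq_abs, inv_sub_inv hna.ne' hnb.ne']
    rw [abs_div, abs_mul, abs_of_pos hna, abs_of_pos hnb]
    have habs : |‖b‖ - ‖a‖| ≤ ‖a - b‖ := by
      rw [norm_sub_rev]; exact abs_norm_sub_norm_le b a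
    calc |‖b‖ - ‖a‖| / (‖a‖ * ‖b‖) * ‖b‖ = |‖b‖ - ‖a‖| / ‖a‖ := by
          field_simp
      _ ≤ ‖a - b‖ / ‖a‖ := by gcongr
  calc ‖‖a‖⁻¹ • (a - b) + (‖a‖⁻¹ - ‖b‖⁻¹) • b‖
      ≤ ‖‖a‖⁻¹ • (a - b)‖ + ‖(‖a‖⁻¹ - ‖b‖⁻¹) • b‖ := norm_add_le _ _
    _ ≤ ‖a - b‖ / ‖a‖ + ‖a - b‖ / ‖a‖ := by rw [h1]; gcongr
    _ = 2 * ‖a - b‖ / ‖a‖ := by ring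

lemma pointwise_bound {y y' x : E} (ha : y + x ≠ 0) (hb : y' + x ≠ 0) :
    ‖x‖ * ‖‖y + x‖⁻¹ • (y + x) - ‖y' + x‖⁻¹ • (y' + x)‖ ≤ 4 * (‖y‖ + ‖y'‖) := by
  set a := y + x with hadef
  set b := y' + x with hbdef
  have hna : (0:ℝ) < ‖a‖ := norm_pos_iff.2 ha
  have hxa : ‖x‖ ≤ ‖a‖ + ‖y‖ := by
    calc ‖x‖ = ‖a - y‖ := by rw [hadef]; congr 1; abel
      _ ≤ ‖a‖ + ‖y‖ := norm_sub_le _ _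
  have hab : ‖a - b‖ ≤ ‖y‖ + ‖y'‖ := by
    have : a - b = y - y' := by rw [hadef, hbdef]; abel
    rw [this]; exact norm_sub_le _ _
  have hD2 : ‖‖a‖⁻¹ • a - ‖b‖⁻¹ • b‖ ≤ 2 := by
    calc ‖‖a‖⁻¹ • a - ‖b‖⁻¹ • b‖ ≤ ‖‖a‖⁻¹ • a‖ + ‖‖b‖⁻¹ • b‖ := norm_sub_le _ _
      _ ≤ 1 + 1 := add_le_add (norm_normalize_le a) (norm_normalize_le b)
      _ = 2 := by norm_num
  rcases le_or_gt ‖y‖ ‖a‖ with h | h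
  · calc ‖x‖ * ‖‖a‖⁻¹ • a - ‖b‖⁻¹ • b‖
        ≤ (2 * ‖a‖) * (2 * ‖a - b‖ / ‖a‖) := by
          apply mul_le_mul _ (normalize_sub_le ha hb) (norm_nonneg _) (by positivity)
          linarith
      _ = 4 * ‖a - b‖ := by field_simp; ring
      _ ≤ 4 * (‖y‖ + ‖y'‖) := by linarith
  · calc ‖x‖ * ‖‖a‖⁻¹ • a - ‖b‖⁻¹ • b‖
        ≤ (2 * ‖y‖) * 2 := by
          apply mul_le_mul _ hD2 (norm_nonneg _) (by positivity)
          linarith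
      _ ≤ 4 * (‖y‖ + ‖y'‖) := by have := norm_nonneg y'; linarith

lemma normalize_smul {r : ℝ} (hr : 0 < r) (a : E) :
    ‖r • a‖⁻¹ • (r • a) = ‖a‖⁻¹ • a := by
  rcases eq_or_ne a 0 with h | h
  · simp [h]
  · have hna : (0:ℝ) < ‖a‖ := norm_pos_iff.2 h
    rw [norm_smul, Real.norm_eq_abs, abs_of_pos hr, smul_smul]
    congr 1
    field_simp

end Aux

noncomputable def S (d : ℕ) (y y' : EuclideanSpace ℝ (Fin d)) : ℝ≥0∞ :=
  ⨆ x : {x : EuclideanSpace ℝ (Fin d) // y + x ≠ 0 ∧ y' + x ≠ 0},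
    ENNReal.ofReal (‖x.1‖ * ‖‖y + x.1‖⁻¹ • (y + x.1) - ‖y' + x.1‖⁻¹ • (y' + x.1)‖)

noncomputable def Cconst (d : ℕ) : ℝ≥0∞ :=
  ⨆ p : {p : EuclideanSpace ℝ (Fin d) × EuclideanSpace ℝ (Fin d) // ‖p.1‖ + ‖p.2‖ = 1},
    S d p.1.1 p.1.2

lemma S_le_bound (d : ℕ) (y y' : EuclideanSpace ℝ (Fin d)) :
    S d y y' ≤ ENNReal.ofReal (4 * (‖y‖ + ‖y'‖)) :=
  iSup_le fun x => ENNReal.ofReal_le_ofReal (pointwise_bound x.2.1 x.2.2)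

lemma S_scale (d : ℕ) {t : ℝ} (ht : 0 < t) (y y' : EuclideanSpace ℝ (Fin d)) :
    S d y y' ≤ ENNReal.ofReal t * S d (t⁻¹ • y) (t⁻¹ • y') := by
  apply iSup_le
  rintro ⟨x, hx1, hx2⟩
  have hti : (0:ℝ) < t⁻¹ := by positivity
  set z := t⁻¹ • y
  set z' := t⁻¹ • y'
  set x' := t⁻¹ • x with hx'def
  have h1 : z + x' = t⁻¹ • (y + x) := by rw [smul_add]
  have h2 : z' + x' = t⁻¹ • (y' + x) := by rw [smul_add]
  have hz1 : z + x' ≠ 0 := by rw [h1]; exact smul_ne_zero hti.ne' hx1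
  have hz2 : z' + x' ≠ 0 := by rw [h2]; exact smul_ne_zero hti.ne' hx2
  have hn1 : ‖z + x'‖⁻¹ • (z + x') = ‖y + x‖⁻¹ • (y + x) := by
    rw [h1, normalize_smul hti]
  have hn2 : ‖z' + x'‖⁻¹ • (z' + x') = ‖y' + x‖⁻¹ • (y' + x) := by
    rw [h2, normalize_smul hti]
  have hxn : ‖x‖ = t * ‖x'‖ := by
    rw [hx'def, norm_smul, Real.norm_eq_abs, abs_of_pos hti]
    field_simp
  calc ENNReal.ofReal (‖x‖ * ‖‖y + x‖⁻¹ • (y + x) - ‖y' + x‖⁻¹ • (y' + x)‖)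
      = ENNReal.ofReal (t * (‖x'‖ * ‖‖z + x'‖⁻¹ • (z + x') - ‖z' + x'‖⁻¹ • (z' + x')‖)) := by
        rw [hn1, hn2, hxn, mul_assoc]
    _ = ENNReal.ofReal t *
        ENNReal.ofReal (‖x'‖ * ‖‖z + x'‖⁻¹ • (z + x') - ‖z' + x'‖⁻¹ • (z' + x')‖) := by
        rw [ENNReal.ofReal_mul ht.le]
    _ ≤ ENNReal.ofReal t * S d z z' := by
        gcongr
        exact le_iSup (fun w : {w : EuclideanSpace ℝ (Fin d) // z + w ≠ 0 ∧ z' + w ≠ 0} =>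
          ENNReal.ofReal (‖w.1‖ * ‖‖z + w.1‖⁻¹ • (z + w.1) - ‖z' + w.1‖⁻¹ • (z' + w.1)‖))
          ⟨x', hz1, hz2⟩

theorem stmt_9 (d : ℕ) :
    Cconst d < ⊤ ∧ ∀ y y' : EuclideanSpace ℝ (Fin d),
      S d y y' < ⊤ ∧ S d y y' ≤ Cconst d * ENNReal.ofReal (‖y‖ + ‖y'‖) := by
  constructor
  · have : Cconst d ≤ ENNReal.ofReal 4 := by
      apply iSup_le
      rintro ⟨⟨z, z'⟩, hp⟩
      have := S_le_bound d z z'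
      simpa [hp] using this
    exact lt_of_le_of_lt this ENNReal.ofReal_lt_top
  · intro y y'
    refine ⟨lt_of_le_of_lt (S_le_bound d y y') ENNReal.ofReal_lt_top, ?_⟩
    rcases eq_or_lt_of_le (by positivity : (0:ℝ) ≤ ‖y‖ + ‖y'‖) with h0 | hpos
    · -- ‖y‖ + ‖y'‖ = 0, so y = y' = 0
      have hy : y = 0 := by
        have := norm_nonneg y; have := norm_nonneg y'
        have : ‖y‖ = 0 := by linarith
        exact norm_eq_zero.mp this
      have hy' : y' = 0 := by
        have := norm_nonneg y; have := norm_nonneg y'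
        have : ‖y'‖ = 0 := by linarith
        exact norm_eq_zero.mp this
      have : S d y y' = 0 := by
        apply le_antisymm _ zero_le
        apply iSup_le
        rintro ⟨x, hx1, hx2⟩
        subst hy hy'
        simp
      rw [this]; exact zero_le
    · set t := ‖y‖ + ‖y'‖ with htdef
      set z := t⁻¹ • y
      set z' := t⁻¹ • y'
      have hp : ‖z‖ + ‖z'‖ = 1 := by
        simp only [z, z', norm_smul, Real.norm_eq_abs, abs_of_pos (inv_pos.2 hpos)]
        rw [← mul_add, ← htdef, inv_mul_cancel₀ hpos.ne']
      have h1 : S d z z' ≤ Cconst d :=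
        le_iSup (fun p : {p : EuclideanSpace ℝ (Fin d) × EuclideanSpace ℝ (Fin d) //
          ‖p.1‖ + ‖p.2‖ = 1} => S d p.1.1 p.1.2) ⟨(z, z'), hp⟩
      calc S d y y' ≤ ENNReal.ofReal t * S d z z' := S_scale d hpos y y'
        _ ≤ ENNReal.ofReal t * Cconst d := by gcongr
        _ = Cconst d * ENNReal.ofReal (‖y‖ + ‖y'‖) := by rw [mul_comm, htdef]
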